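/- Let n ∈ ℕ with n ≥ 1 and k ∈ ℝ with k ≥ 0 and kn − n/2 > −1/2. For every ℓ ∈ ℕ₀ there exist real constants d_{0,ℓ}, …, d_{ℓ,ℓ} with d_{0,ℓ} = 1 (depending only on k, n, ℓ) such that for all x, y ∈ ℝ with xy ≠ 0, the ℓ-th iterate of the Euler operator x ∂/∂x (acting in the variable x) satisfies (x ∂/∂x)^ℓ ( xy · j_{kn+n/2}(n|xy|^{1/n}) ) = Σ_{j=0}^ℓ d_{j,ℓ} |xy|^{2j/n} · xy · j_{kn+n/2+j}(n|xy|^{1/n}). -/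

import Mathlib

open MeasureTheory Real
open scoped ENNReal NNReal

noncomputable section

/-- Euler operator `g ↦ x g'(x)` on real-valued functions. -/
def eulerR (f : ℝ → ℝ) (x : ℝ) : ℝ := x * deriv f x

/-- The normalized Bessel function `j_ν`. -/
def besselJ (ν : ℝ) (z : ℝ) : ℝ :=
  Real.Gamma (ν + 1) *
    ∑' m : ℕ, ((-1 : ℝ) ^ m / ((m.factorial : ℝ) * Real.Gamma (ν + (m : ℝ) + 1))) *
      (z / 2) ^ (2 * m)

namespace BJ

def bc (ν : ℝ) (m : ℕ) : ℝ := (-1 : ℝ) ^ m / ((m.factorial : ℝ) * Real.Gamma (ν + (m : ℝ) + 1))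

lemma besselJ_eq (ν z : ℝ) : besselJ ν z = Real.Gamma (ν + 1) * ∑' m : ℕ, bc ν m * (z / 2) ^ (2 * m) := rfl

lemma gamma_ge (ν : ℝ) (hν : 0 ≤ ν) (m : ℕ) :
    Real.Gamma (ν + 1) * m.factorial ≤ Real.Gamma (ν + m + 1) := by
  induction m with
  | zero => simp
  | succ m ih =>
    have h1 : ν + (m + 1 : ℕ) + 1 = (ν + m + 1) + 1 := by push_cast; ring
    have hG : Real.Gamma ((ν + m + 1) + 1) = (ν + m + 1) * Real.Gamma (ν + m + 1) :=
      Real.Gamma_add_one (by positivity)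
    rw [h1, hG]
    have hpos : 0 < Real.Gamma (ν + m + 1) := Real.Gamma_pos_of_pos (by positivity)
    have h2 : (m + 1 : ℝ) ≤ ν + m + 1 := by linarith
    calc Real.Gamma (ν + 1) * ((m + 1 : ℕ).factorial : ℝ)
        = (m + 1 : ℝ) * (Real.Gamma (ν + 1) * m.factorial) := by
          rw [Nat.factorial_succ]; push_cast; ring
      _ ≤ (ν + m + 1) * Real.Gamma (ν + m + 1) := by
          apply mul_le_mul h2 ih (by positivity) (by positivity)

lemma bc_abs_le (ν : ℝ) (hν : 0 ≤ ν) (m : ℕ) :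
    |bc ν m| ≤ 1 / ((m.factorial : ℝ) * m.factorial * Real.Gamma (ν + 1)) := by
  have hg : 0 < Real.Gamma (ν + m + 1) := Real.Gamma_pos_of_pos (by positivity)
  have hΓ : 0 < Real.Gamma (ν + 1) := Real.Gamma_pos_of_pos (by positivity)
  have hf : (0:ℝ) < m.factorial := by exact_mod_cast m.factorial_pos
  have h1 : |bc ν m| = 1 / ((m.factorial : ℝ) * Real.Gamma (ν + m + 1)) := by
    rw [bc, abs_div, abs_pow, abs_neg, abs_one, one_pow, abs_of_pos (by positivity)]
  rw [h1]
  apply one_div_le_one_div_of_le (by positivity)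
  calc (m.factorial : ℝ) * m.factorial * Real.Gamma (ν + 1)
      = (m.factorial : ℝ) * (Real.Gamma (ν + 1) * m.factorial) := by ring
    _ ≤ (m.factorial : ℝ) * Real.Gamma (ν + m + 1) := by
        apply mul_le_mul_of_nonneg_left (gamma_ge ν hν m) (le_of_lt hf)

lemma summable_bound (C : ℝ) : Summable (fun m : ℕ => (2 * C) ^ m / m.factorial) :=
  Real.summable_pow_div_factorial _

lemma term_bound (ν : ℝ) (hν : 0 ≤ ν) (M : ℝ) (hM : 1 ≤ M) (m : ℕ) (y : ℝ) (hy : |y| ≤ M) :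
    |bc ν m * ((2 * m : ℕ) * (y / 2) ^ (2 * m - 1) * (1/2))| ≤
      (2 * M ^ 2) ^ m / m.factorial / Real.Gamma (ν + 1) := by
  have hΓ : 0 < Real.Gamma (ν + 1) := Real.Gamma_pos_of_pos (by positivity)
  have hf : (0:ℝ) < m.factorial := by exact_mod_cast m.factorial_pos
  have h1 : |bc ν m * ((2 * m : ℕ) * (y / 2) ^ (2 * m - 1) * (1/2))|
      = |bc ν m| * ((m : ℝ) * |y / 2| ^ (2 * m - 1)) := by
    rw [abs_mul, abs_mul, abs_mul, abs_pow]
    push_cast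
    rw [abs_of_nonneg (by positivity : (0:ℝ) ≤ 2 * (m:ℝ)), abs_of_nonneg (by norm_num : (0:ℝ) ≤ (1:ℝ)/2)]
    ring
  rw [h1]
  have h2 : |y / 2| ^ (2 * m - 1) ≤ M ^ (2 * m) := by
    calc |y / 2| ^ (2 * m - 1) ≤ M ^ (2 * m - 1) := by
          apply pow_le_pow_left₀ (abs_nonneg _)
          rw [abs_div]
          calc |y| / |(2:ℝ)| ≤ M / 2 := by
                rw [abs_two]; exact div_le_div_of_nonneg_right hy (by norm_num) |>.trans (le_refl _)
            _ ≤ M := by linarith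
      _ ≤ M ^ (2 * m) := pow_le_pow_right₀ hM (Nat.sub_le _ _)
  have h3 : (m : ℝ) ≤ 2 ^ m := by exact_mod_cast Nat.le_of_lt (Nat.lt_two_pow_self (n := m))
  calc |bc ν m| * ((m : ℝ) * |y / 2| ^ (2 * m - 1))
      ≤ (1 / ((m.factorial : ℝ) * m.factorial * Real.Gamma (ν + 1))) * ((2:ℝ) ^ m * M ^ (2 * m)) := by
        apply mul_le_mul (bc_abs_le ν hν m) ?_ (by positivity) (by positivity)
        exact mul_le_mul h3 h2 (by positivity) (by positivity)
    _ ≤ (2 * M ^ 2) ^ m / m.factorial / Real.Gamma (ν + 1) := by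
        rw [mul_pow, pow_mul]
        have hff : (1:ℝ) ≤ m.factorial := by exact_mod_cast m.factorial_pos
        rw [div_div, div_mul_eq_mul_div, one_mul]
        apply div_le_div_of_nonneg_left (by positivity) (by positivity)
        nlinarith [mul_pos hf hΓ]

end BJ

namespace BJ

lemma term_bound0 (ν : ℝ) (hν : 0 ≤ ν) (M : ℝ) (hM : 1 ≤ M) (m : ℕ) (y : ℝ) (hy : |y| ≤ M) :
    |bc ν m * (y / 2) ^ (2 * m)| ≤ (2 * M ^ 2) ^ m / m.factorial / Real.Gamma (ν + 1) := by
  have hΓ : 0 < Real.Gamma (ν + 1) := Real.Gamma_pos_of_pos (by positivity)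
  have hf : (0:ℝ) < m.factorial := by exact_mod_cast m.factorial_pos
  have h2 : |y / 2| ^ (2 * m) ≤ M ^ (2 * m) := by
    apply pow_le_pow_left₀ (abs_nonneg _)
    rw [abs_div, abs_two]
    linarith [abs_nonneg y]
  rw [abs_mul, abs_pow]
  calc |bc ν m| * |y / 2| ^ (2 * m)
      ≤ (1 / ((m.factorial : ℝ) * m.factorial * Real.Gamma (ν + 1))) * M ^ (2 * m) := by
        apply mul_le_mul (bc_abs_le ν hν m) h2 (by positivity) (by positivity)
    _ ≤ (2 * M ^ 2) ^ m / m.factorial / Real.Gamma (ν + 1) := by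
        rw [mul_pow, pow_mul, div_div, div_mul_eq_mul_div, one_mul]
        have h1 : (1:ℝ) ≤ 2 ^ m := one_le_pow₀ (by norm_num)
        have hMp : (0:ℝ) < (M^2)^m := by positivity
        have hff : (1:ℝ) ≤ m.factorial := by exact_mod_cast m.factorial_pos
        apply div_le_div₀ (by positivity) (by nlinarith) (by positivity)
        nlinarith [mul_pos hf hΓ]

lemma summable_series (ν : ℝ) (hν : 0 ≤ ν) (z : ℝ) :
    Summable (fun m : ℕ => bc ν m * (z / 2) ^ (2 * m)) := by
  apply Summable.of_norm_bounded
    (((Real.summable_pow_div_factorial (2 * (|z| + 1) ^ 2)).div_const (Real.Gamma (ν + 1))))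
  intro m
  exact term_bound0 ν hν (|z| + 1) (by linarith [abs_nonneg z]) m z (by linarith [abs_nonneg z])

lemma bc_succ (ν : ℝ) (hν : 0 ≤ ν) (m : ℕ) :
    bc ν (m + 1) * ((m : ℝ) + 1) = -bc (ν + 1) m := by
  have harg : ν + ((m + 1 : ℕ) : ℝ) + 1 = ν + 1 + (m : ℝ) + 1 := by push_cast; ring
  have hΓ : 0 < Real.Gamma (ν + 1 + m + 1) := Real.Gamma_pos_of_pos (by positivity)
  have hf : (0:ℝ) < m.factorial := by exact_mod_cast m.factorial_pos
  rw [bc, bc, harg, Nat.factorial_succ, pow_succ]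
  push_cast
  field_simp

lemma hasDerivAt_besselJ (ν : ℝ) (hν : 0 ≤ ν) (z : ℝ) :
    HasDerivAt (besselJ ν) (-(z / (2 * (ν + 1))) * besselJ (ν + 1) z) z := by
  have hΓ : 0 < Real.Gamma (ν + 1) := Real.Gamma_pos_of_pos (by positivity)
  set M : ℝ := |z| + 1 with hMdef
  have hM : 1 ≤ M := by simp [hMdef]
  set g : ℕ → ℝ → ℝ := fun m y => bc ν m * (y / 2) ^ (2 * m) with hg_def
  set g' : ℕ → ℝ → ℝ := fun m y => bc ν m * ((2 * m : ℕ) * (y / 2) ^ (2 * m - 1) * (1/2)) with hg'_def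
  set u : ℕ → ℝ := fun m => (2 * M ^ 2) ^ m / m.factorial / Real.Gamma (ν + 1) with hu_def
  have hu : Summable u := (Real.summable_pow_div_factorial _).div_const _
  have hball : ∀ y ∈ Metric.ball (0:ℝ) M, |y| ≤ M := by
    intro y hy
    rw [Metric.mem_ball, Real.dist_eq, sub_zero] at hy
    exact le_of_lt hy
  have hz : z ∈ Metric.ball (0:ℝ) M := by
    rw [Metric.mem_ball, Real.dist_eq, sub_zero]; simp [hMdef]
  have hg : ∀ m y, y ∈ Metric.ball (0:ℝ) M → HasDerivAt (g m) (g' m y) y := by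
    intro m y _
    exact (((hasDerivAt_id y).div_const 2).pow (2 * m)).const_mul (bc ν m)
  have hg' : ∀ m y, y ∈ Metric.ball (0:ℝ) M → ‖g' m y‖ ≤ u m := by
    intro m y hy
    rw [Real.norm_eq_abs]
    exact term_bound ν hν M hM m y (hball y hy)
  have hg0 : Summable fun m => g m z := summable_series ν hν z
  have main : HasDerivAt (fun y => ∑' m, g m y) (∑' m, g' m z) z :=
    hasDerivAt_tsum_of_isPreconnected hu Metric.isOpen_ball
      ((convex_ball (0:ℝ) M).isPreconnected) hg hg' hz hg0 hz
  have hsum' : Summable fun m => g' m z := by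
    apply Summable.of_norm_bounded hu
    intro m
    rw [Real.norm_eq_abs]
    exact term_bound ν hν M hM m z (hball z hz)
  have hval : ∑' m, g' m z = -(z / 2) * ∑' m, bc (ν + 1) m * (z / 2) ^ (2 * m) := by
    rw [Summable.tsum_eq_zero_add hsum']
    have h0 : g' 0 z = 0 := by simp [hg'_def]
    have hshift : ∀ m : ℕ, g' (m + 1) z = -(z / 2) * (bc (ν + 1) m * (z / 2) ^ (2 * m)) := by
      intro m
      have he : 2 * (m + 1) - 1 = 2 * m + 1 := by omega
      have : g' (m + 1) z = (bc ν (m + 1) * ((m:ℝ) + 1)) * ((z / 2) ^ (2 * m) * (z / 2)) := by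
        simp only [hg'_def, he, pow_succ]
        push_cast
        try ring
      rw [this, bc_succ ν hν m]
      ring
    rw [h0, zero_add]
    rw [tsum_congr hshift, tsum_mul_left]
  have final : HasDerivAt (besselJ ν) (Real.Gamma (ν + 1) * ∑' m, g' m z) z := by
    exact main.const_mul (Real.Gamma (ν + 1))
  rw [hval] at final
  convert final using 1
  rw [besselJ_eq (ν + 1) z]
  have hG2 : Real.Gamma (ν + 1 + 1) = (ν + 1) * Real.Gamma (ν + 1) :=
    Real.Gamma_add_one (by positivity)
  rw [hG2]
  have hν1 : (ν:ℝ) + 1 ≠ 0 := by positivity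
  field_simp
  try ring

end BJ

namespace BJ

lemma hasDerivAt_abs_rpow (a : ℝ) {t : ℝ} (ht : t ≠ 0) :
    HasDerivAt (fun s : ℝ => |s| ^ a) (a * |t| ^ a / t) t := by
  rcases ht.lt_or_gt with h | h
  · have hneg : (0:ℝ) < -t := by linarith
    have h1 : HasDerivAt (fun s : ℝ => (-s) ^ a) (a * (-t) ^ (a - 1) * (-1)) t :=
      (Real.hasDerivAt_rpow_const (x := -t) (p := a) (Or.inl (by positivity))).comp t
        ((hasDerivAt_id t).neg)
    have hev : (fun s : ℝ => |s| ^ a) =ᶠ[nhds t] (fun s : ℝ => (-s) ^ a) := by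
      filter_upwards [eventually_lt_nhds h] with s hs
      rw [abs_of_neg hs]
    have h2 := h1.congr_of_eventuallyEq hev
    refine h2.congr_deriv (Eq.symm ?_)
    rw [abs_of_neg h, Real.rpow_sub hneg, Real.rpow_one]
    field_simp
  · have h1 : HasDerivAt (fun s : ℝ => s ^ a) (a * t ^ (a - 1)) t :=
      Real.hasDerivAt_rpow_const (Or.inl ht)
    have hev : (fun s : ℝ => |s| ^ a) =ᶠ[nhds t] (fun s : ℝ => s ^ a) := by
      filter_upwards [eventually_gt_nhds h] with s hs
      rw [abs_of_pos hs]
    have h2 := h1.congr_of_eventuallyEq hev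
    refine h2.congr_deriv (Eq.symm ?_)
    rw [abs_of_pos h, Real.rpow_sub h, Real.rpow_one]
    field_simp

def Hf (ν nr : ℝ) (j : ℕ) (t : ℝ) : ℝ :=
  |t| ^ (2 * (j : ℝ) / nr) * t * besselJ (ν + j) (nr * |t| ^ (1 / nr))

lemma hasDerivAt_Hf (ν nr : ℝ) (hν : 0 ≤ ν) (hnr : 0 < nr) (j : ℕ) {t : ℝ} (ht : t ≠ 0) :
    HasDerivAt (Hf ν nr j)
      (((2 * (j : ℝ) / nr + 1) * Hf ν nr j t - nr / (2 * (ν + j + 1)) * Hf ν nr (j + 1) t) / t)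
      t := by
  have htabs : 0 < |t| := abs_pos.2 ht
  set a : ℝ := 2 * (j : ℝ) / nr with ha
  set b : ℝ := 1 / nr with hb
  set z : ℝ := nr * |t| ^ b with hz
  have hμ : (0:ℝ) ≤ ν + j := by positivity
  have hA : HasDerivAt (fun s : ℝ => |s| ^ a) (a * |t| ^ a / t) t := hasDerivAt_abs_rpow a ht
  have hinner : HasDerivAt (fun s : ℝ => nr * |s| ^ b) (nr * (b * |t| ^ b / t)) t :=
    (hasDerivAt_abs_rpow b ht).const_mul nr
  have hC : HasDerivAt (fun s : ℝ => besselJ (ν + j) (nr * |s| ^ b))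
      ((-(z / (2 * (ν + j + 1))) * besselJ (ν + j + 1) z) * (nr * (b * |t| ^ b / t))) t :=
    by have := (hasDerivAt_besselJ (ν + j) hμ z).comp t hinner; exact this
  have hAB : HasDerivAt (fun s : ℝ => |s| ^ a * s) (a * |t| ^ a / t * t + |t| ^ a * 1) t :=
    hA.mul (hasDerivAt_id t)
  have hfull := hAB.mul hC
  refine hfull.congr_deriv (Eq.symm ?_)
  show _ = _ * besselJ (ν + j) z + _ * ((-(z / (2 * (ν + j + 1))) * besselJ (ν + j + 1) z) * _)
  have harg : ν + ((j + 1 : ℕ) : ℝ) = ν + j + 1 := by push_cast; ring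
  have hab : |t| ^ (2 * ((j + 1 : ℕ) : ℝ) / nr) = |t| ^ a * (|t| ^ b * |t| ^ b) := by
    rw [← Real.rpow_add htabs, ← Real.rpow_add htabs]
    congr 1
    rw [ha, hb]
    push_cast
    field_simp
    ring
  simp only [Hf, harg, hab, ← hz]
  have hd : (0:ℝ) < ν + j + 1 := by positivity
  have hnr' : nr ≠ 0 := ne_of_gt hnr
  have hd' : ν + (j:ℝ) + 1 ≠ 0 := ne_of_gt hd
  rw [hz]
  rw [hb]
  generalize |t| ^ a = P
  generalize |t| ^ (1 / nr) = Q
  generalize besselJ (ν + j) (nr * Q) = B0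
  generalize besselJ (ν + j + 1) (nr * Q) = B1
  rw [ha]
  field_simp
  ring
end BJ

namespace BJ

lemma main (ν nr : ℝ) (hν : 0 ≤ ν) (hnr : 0 < nr) (ℓ : ℕ) :
    ∃ d : ℕ → ℝ, d 0 = 1 ∧ (∀ j, ℓ < j → d j = 0) ∧ ∀ x y : ℝ, x * y ≠ 0 →
      (eulerR)^[ℓ] (fun t => Hf ν nr 0 (t * y)) x =
        ∑ j ∈ Finset.range (ℓ + 1), d j * Hf ν nr j (x * y) := by
  induction ℓ with
  | zero =>
    refine ⟨fun j => if j = 0 then 1 else 0, rfl, ?_, ?_⟩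
    · intro j hj; simp only [ite_eq_right_iff]; omega
    · intro x y h; simp
  | succ ℓ ih =>
    obtain ⟨d, hd0, hdz, hd⟩ := ih
    set d' : ℕ → ℝ := fun j => match j with
      | 0 => 1
      | (m + 1) => (2 * ((m : ℝ) + 1) / nr + 1) * d (m + 1) - nr / (2 * (ν + m + 1)) * d m
      with hd'
    refine ⟨d', rfl, ?_, ?_⟩
    · intro j hj
      match j, hj with
      | (m + 1), hj =>
        show (2 * ((m : ℝ) + 1) / nr + 1) * d (m + 1) - nr / (2 * (ν + m + 1)) * d m = 0
        rw [hdz (m + 1) (by omega), hdz m (by omega)]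
        ring
    · intro x y hxy
      have hy : y ≠ 0 := fun h => hxy (by simp [h])
      have hx : x ≠ 0 := fun h => hxy (by simp [h])
      have ht : x * y ≠ 0 := hxy
      rw [Function.iterate_succ_apply']
      set G : ℝ → ℝ := fun s => ∑ j ∈ Finset.range (ℓ + 1), d j * Hf ν nr j (s * y) with hG
      have hev : (eulerR)^[ℓ] (fun t => Hf ν nr 0 (t * y)) =ᶠ[nhds x] G := by
        filter_upwards [eventually_ne_nhds hx] with s hs
        exact hd s y (mul_ne_zero hs hy)
      have hderiv : ∀ j : ℕ, HasDerivAt (fun s => Hf ν nr j (s * y))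
          ((((2 * (j : ℝ) / nr + 1) * Hf ν nr j (x * y)
            - nr / (2 * (ν + j + 1)) * Hf ν nr (j + 1) (x * y)) / (x * y)) * y) x := by
        intro j
        have h1 : HasDerivAt (fun s : ℝ => s * y) y x := by
          simpa using (hasDerivAt_id x).mul_const y
        exact (hasDerivAt_Hf ν nr hν hnr j ht).comp x h1
      have hG' : HasDerivAt G (∑ j ∈ Finset.range (ℓ + 1), d j *
          ((((2 * (j : ℝ) / nr + 1) * Hf ν nr j (x * y)
            - nr / (2 * (ν + j + 1)) * Hf ν nr (j + 1) (x * y)) / (x * y)) * y)) x :=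
        HasDerivAt.fun_sum (fun j _ => (hderiv j).const_mul (d j))
      show eulerR ((eulerR)^[ℓ] (fun t => Hf ν nr 0 (t * y))) x = _
      rw [eulerR, hev.deriv_eq, hG'.deriv, Finset.mul_sum]
      have step1 : ∀ j ∈ Finset.range (ℓ + 1), x * (d j *
          ((((2 * (j : ℝ) / nr + 1) * Hf ν nr j (x * y)
            - nr / (2 * (ν + j + 1)) * Hf ν nr (j + 1) (x * y)) / (x * y)) * y)) =
          d j * ((2 * (j : ℝ) / nr + 1) * Hf ν nr j (x * y))
            - d j * (nr / (2 * (ν + j + 1)) * Hf ν nr (j + 1) (x * y)) := by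
        intro j _
        field_simp
      rw [Finset.sum_congr rfl step1, Finset.sum_sub_distrib]
      have e1 : ∑ j ∈ Finset.range (ℓ + 1), d j * ((2 * (j : ℝ) / nr + 1) * Hf ν nr j (x * y))
          = ∑ j ∈ Finset.range (ℓ + 2), d j * ((2 * (j : ℝ) / nr + 1) * Hf ν nr j (x * y)) := by
        rw [Finset.sum_range_succ (n := ℓ + 1), hdz (ℓ + 1) (by omega)]
        ring
      have e2 : ∑ j ∈ Finset.range (ℓ + 1), d j * (nr / (2 * (ν + j + 1)) * Hf ν nr (j + 1) (x * y))
          = ∑ j ∈ Finset.range (ℓ + 2), (match j with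
              | 0 => (0:ℝ)
              | (m + 1) => d m * (nr / (2 * (ν + m + 1)) * Hf ν nr (m + 1) (x * y))) := by
        rw [Finset.sum_range_succ' (n := ℓ + 1)]
        simp
      rw [e1, e2, ← Finset.sum_sub_distrib]
      apply Finset.sum_congr rfl
      intro j _
      match j with
      | 0 =>
        show d 0 * ((2 * ((0:ℕ) : ℝ) / nr + 1) * Hf ν nr 0 (x * y)) - 0 = 1 * Hf ν nr 0 (x * y)
        rw [hd0]
        norm_num
      | (m + 1) =>
        show d (m + 1) * ((2 * ((m + 1 : ℕ) : ℝ) / nr + 1) * Hf ν nr (m + 1) (x * y))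
            - d m * (nr / (2 * (ν + m + 1)) * Hf ν nr (m + 1) (x * y))
          = ((2 * ((m : ℝ) + 1) / nr + 1) * d (m + 1) - nr / (2 * (ν + m + 1)) * d m)
              * Hf ν nr (m + 1) (x * y)
        push_cast
        ring

end BJ

/-- Iterates of the Euler operator applied to `xy j_{kn+n/2}(n|xy|^{1/n})` (in `x`) are
linear combinations `Σ_{j=0}^ℓ d_{j,ℓ} |xy|^{2j/n} xy j_{kn+n/2+j}(n|xy|^{1/n})` with
`d_{0,ℓ} = 1`. -/
theorem euler_iterate_besselJ_odd (n : ℕ) (hn : 1 ≤ n) (k : ℝ) (hk : 0 ≤ k)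
    (hkn : k * n - (n : ℝ) / 2 > -(1 / 2)) (ℓ : ℕ) :
    ∃ d : ℕ → ℝ, d 0 = 1 ∧ ∀ x y : ℝ, x * y ≠ 0 →
      (eulerR)^[ℓ]
          (fun t : ℝ =>
            t * y * besselJ (k * n + (n : ℝ) / 2) ((n : ℝ) * |t * y| ^ (1 / (n : ℝ)))) x =
        ∑ j ∈ Finset.range (ℓ + 1), d j * |x * y| ^ (2 * (j : ℝ) / (n : ℝ)) * (x * y) *
          besselJ (k * n + (n : ℝ) / 2 + j) ((n : ℝ) * |x * y| ^ (1 / (n : ℝ))) := by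
  have hn' : (0:ℝ) < n := by exact_mod_cast hn
  set ν : ℝ := k * n + (n : ℝ) / 2 with hν_def
  have hν : 0 ≤ ν := by
    have : 0 ≤ k * n := mul_nonneg hk (le_of_lt hn')
    rw [hν_def]; linarith
  obtain ⟨d, hd0, -, hd⟩ := BJ.main ν n hν hn' ℓ
  refine ⟨d, hd0, ?_⟩
  intro x y hxy
  have hfun : (fun t : ℝ => t * y * besselJ ν ((n : ℝ) * |t * y| ^ (1 / (n : ℝ))))
      = (fun t : ℝ => BJ.Hf ν (n : ℝ) 0 (t * y)) := by
    funext t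
    simp [BJ.Hf, mul_assoc]
  rw [hfun, hd x y hxy]
  apply Finset.sum_congr rfl
  intro j _
  rw [BJ.Hf]
  ring

end
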